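/- Let B ⊆ A be a regular inclusion of C*-algebras with the regular ideal intersection property, N a *-semigroup of normalizers with dense span, and E : A → B a faithful N-invariant conditional expectation. Then the map J ↦ J ∩ B is a Boolean algebra isomorphism from the regular ideals of A onto the invariant regular ideals of B, with inverse K ↦ J_K = {a ∈ A : E(a*a) ∈ K}. -/

import Mathlib

/-- Two-sided annihilator of a subset of an algebra. -/
def ann {A : Type*} [NonUnitalNonAssocSemiring A] (X : Set A) : Set A :=
  {a | ∀ x ∈ X, a * x = 0 ∧ x * a = 0}

/-- A (not necessarily closed) two-sided ideal, as a subset. -/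
def IsAlgIdeal {A : Type*} [NonUnitalNonAssocSemiring A] (J : Set A) : Prop :=
  (0 : A) ∈ J ∧ (∀ x ∈ J, ∀ y ∈ J, x + y ∈ J) ∧ ∀ a : A, ∀ x ∈ J, a * x ∈ J ∧ x * a ∈ J

/-- A closed two-sided ideal. -/
def IsIdeal {A : Type*} [NonUnitalNormedRing A] (J : Set A) : Prop :=
  IsAlgIdeal J ∧ IsClosed J

/-- A regular ideal: a closed two-sided ideal equal to its double annihilator. -/
def IsRegularIdeal {A : Type*} [NonUnitalNormedRing A] (J : Set A) : Prop :=
  IsIdeal J ∧ J = ann (ann J)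

variable {A : Type*} [NonUnitalNormedRing A] [StarRing A] [CStarRing A] [CompleteSpace A]
  [NormedSpace ℂ A] [IsScalarTower ℂ A A] [SMulCommClass ℂ A A] [StarModule ℂ A]
  [PartialOrder A] [StarOrderedRing A]

/-- `B` is a (non-unital, closed, star-closed) C*-subalgebra of `A`. -/
def IsCStarSubalgebra (B : Set A) : Prop :=
  (0 : A) ∈ B ∧ (∀ x ∈ B, ∀ y ∈ B, x + y ∈ B) ∧ (∀ x ∈ B, ∀ y ∈ B, x * y ∈ B) ∧
  (∀ (c : ℂ), ∀ x ∈ B, c • x ∈ B) ∧ (∀ x ∈ B, star x ∈ B) ∧ IsClosed B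

/-- `B` contains an approximate unit for `A`. -/
def ContainsApproxUnit (B : Set A) : Prop :=
  ∀ a : A, ∀ ε > (0 : ℝ), ∃ b ∈ B, ‖b‖ ≤ 1 ∧ ‖a - b * a‖ < ε ∧ ‖a - a * b‖ < ε

/-- `B ⊆ A` is an inclusion of C*-algebras: a C*-subalgebra containing an
approximate unit for `A`. -/
def IsCStarInclusion (B : Set A) : Prop :=
  IsCStarSubalgebra B ∧ ContainsApproxUnit B

/-- `n` is a normalizer of `B` in `A`: `nBn* ⊆ B` and `n*Bn ⊆ B`. -/
def IsNormalizer (B : Set A) (n : A) : Prop :=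
  (∀ b ∈ B, n * b * star n ∈ B) ∧ (∀ b ∈ B, star n * b * n ∈ B)

/-- `B ⊆ A` is a regular inclusion: an inclusion whose normalizers span a dense
subspace of `A`. -/
def IsRegularInclusion (B : Set A) : Prop :=
  IsCStarInclusion B ∧
  closure (Submodule.span ℂ {n | IsNormalizer B n} : Set A) = Set.univ

/-- `E : A → A` is a conditional expectation onto `B`. -/
def IsCondExp (B : Set A) (E : A → A) : Prop :=
  (∀ a, E a ∈ B) ∧ (∀ b ∈ B, E b = b) ∧
  (∀ x y, E (x + y) = E x + E y) ∧ (∀ (c : ℂ) (x : A), E (c • x) = c • E x) ∧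
  (∀ a : A, 0 ≤ a → 0 ≤ E a) ∧ (∀ a, ‖E a‖ ≤ ‖a‖) ∧
  (∀ b ∈ B, ∀ a, E (b * a) = b * E a ∧ E (a * b) = E a * b)

/-- Faithfulness of a positive map: `E(a*a) = 0 → a = 0`. -/
def IsFaithful (E : A → A) : Prop := ∀ a, E (star a * a) = 0 → a = 0

/-- `N` is a `*`-semigroup of normalizers of `B` with dense linear span in `A`. -/
def IsNormalizerSemigroup (B N : Set A) : Prop :=
  (∀ n ∈ N, IsNormalizer B n) ∧ (∀ n ∈ N, star n ∈ N) ∧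
  (∀ m ∈ N, ∀ n ∈ N, m * n ∈ N) ∧
  closure (Submodule.span ℂ N : Set A) = Set.univ

/-- `K` is invariant under `N`: `nKn* ⊆ K` for all `n ∈ N`. -/
def InvariantUnder (N K : Set A) : Prop := ∀ n ∈ N, ∀ k ∈ K, n * k * star n ∈ K

/-- `E` is `N`-invariant: `E(nan*) = nE(a)n*` for all `n ∈ N`. -/
def IsInvariantCondExp (N : Set A) (E : A → A) : Prop :=
  ∀ n ∈ N, ∀ a : A, E (n * a * star n) = n * E a * star n

/-- A closed two-sided ideal of the subalgebra `B`. -/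
def IsIdealIn (B K : Set A) : Prop :=
  K ⊆ B ∧ (0 : A) ∈ K ∧ (∀ x ∈ K, ∀ y ∈ K, x + y ∈ K) ∧
  (∀ b ∈ B, ∀ x ∈ K, b * x ∈ K ∧ x * b ∈ K) ∧ IsClosed K

/-- A regular ideal of the subalgebra `B`: `K = K^{⊥_B ⊥_B}` with annihilators
computed inside `B`. -/
def IsRegularIdealIn (B K : Set A) : Prop :=
  IsIdealIn B K ∧ K = ann (ann K ∩ B) ∩ B

/-- `B ⊆ A` has the ideal intersection property. -/
def HasIIP (B : Set A) : Prop :=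
  ∀ J : Set A, IsIdeal J → J ≠ {0} → ∃ x ∈ J ∩ B, x ≠ 0

/-- `B ⊆ A` has the regular ideal intersection property. -/
def HasRIIP (B : Set A) : Prop :=
  ∀ J : Set A, IsRegularIdeal J → J ≠ {0} → ∃ x ∈ J ∩ B, x ≠ 0


namespace RIaux

section Alg

variable {A : Type*} [NonUnitalNormedRing A]

lemma ann_antitone {X Y : Set A} (h : X ⊆ Y) : ann Y ⊆ ann X :=
  fun a ha x hx => ha x (h hx)

lemma subset_ann_ann (X : Set A) : X ⊆ ann (ann X) :=
  fun x hx a ha => ⟨(ha x hx).2, (ha x hx).1⟩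

lemma ann_ann_ann (X : Set A) : ann (ann (ann X)) = ann X :=
  Set.Subset.antisymm (ann_antitone (subset_ann_ann X)) (subset_ann_ann (ann X))

lemma isClosed_ann (X : Set A) : IsClosed (ann X) := by
  have h : ann X = ⋂ x ∈ X, ({a : A | a * x = 0} ∩ {a : A | x * a = 0}) := by
    ext a
    simp only [ann, Set.mem_setOf_eq, Set.mem_iInter, Set.mem_inter_iff]
  rw [h]
  refine isClosed_biInter fun x _ => IsClosed.inter ?_ ?_
  · exact isClosed_eq (continuous_id.mul continuous_const) continuous_const
  · exact isClosed_eq (continuous_const.mul continuous_id) continuous_const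

lemma zero_mem_ann (X : Set A) : (0 : A) ∈ ann X := fun x _ => by simp

lemma ann_isAlgIdeal {J : Set A} (hJ : IsAlgIdeal J) : IsAlgIdeal (ann J) := by
  obtain ⟨-, -, hmul⟩ := hJ
  refine ⟨zero_mem_ann J, ?_, ?_⟩
  · intro x hx y hy z hz
    obtain ⟨h1, h2⟩ := hx z hz; obtain ⟨h3, h4⟩ := hy z hz
    constructor
    · rw [add_mul, h1, h3, add_zero]
    · rw [mul_add, h2, h4, add_zero]
  · intro a x hx
    constructor
    · intro z hz
      refine ⟨by rw [mul_assoc, (hx z hz).1, mul_zero], ?_⟩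
      rw [← mul_assoc, (hx (z * a) ((hmul a z hz).2)).2]
    · intro z hz
      refine ⟨by rw [mul_assoc, (hx (a * z) ((hmul a z hz).1)).1], ?_⟩
      rw [← mul_assoc, (hx z hz).2, zero_mul]

lemma ann_isIdeal {J : Set A} (hJ : IsAlgIdeal J) : IsIdeal (ann J) :=
  ⟨ann_isAlgIdeal hJ, isClosed_ann J⟩

lemma ann_isRegular {J : Set A} (hJ : IsAlgIdeal J) : IsRegularIdeal (ann J) :=
  ⟨ann_isIdeal hJ, (ann_ann_ann J).symm⟩

lemma ann_ann_isRegular {J : Set A} (hJ : IsAlgIdeal J) : IsRegularIdeal (ann (ann J)) :=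
  ann_isRegular (ann_isAlgIdeal hJ)

lemma inter_isIdeal {J K : Set A} (hJ : IsIdeal J) (hK : IsIdeal K) : IsIdeal (J ∩ K) := by
  obtain ⟨⟨hJ0, hJa, hJm⟩, hJc⟩ := hJ
  obtain ⟨⟨hK0, hKa, hKm⟩, hKc⟩ := hK
  exact ⟨⟨⟨hJ0, hK0⟩, fun x hx y hy => ⟨hJa x hx.1 y hy.1, hKa x hx.2 y hy.2⟩,
    fun a x hx => ⟨⟨(hJm a x hx.1).1, (hKm a x hx.2).1⟩, ⟨(hJm a x hx.1).2, (hKm a x hx.2).2⟩⟩⟩,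
    hJc.inter hKc⟩

lemma inter_isRegular {J K : Set A} (hJ : IsRegularIdeal J) (hK : IsRegularIdeal K) :
    IsRegularIdeal (J ∩ K) := by
  refine ⟨inter_isIdeal hJ.1 hK.1, Set.Subset.antisymm (subset_ann_ann _) ?_⟩
  intro a ha
  constructor
  · have := ann_antitone (ann_antitone (Set.inter_subset_left (s := J) (t := K))) ha
    rwa [← hJ.2] at this
  · have := ann_antitone (ann_antitone (Set.inter_subset_right (s := J) (t := K))) ha
    rwa [← hK.2] at this

/-- Two ideals with trivial intersection annihilate each other. -/
lemma subset_ann_of_inter {I J : Set A} (hI : IsAlgIdeal I) (hJ : IsAlgIdeal J)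
    (h : I ∩ J ⊆ {0}) : I ⊆ ann J := by
  intro a ha x hx
  constructor
  · have h1 : a * x ∈ I := (hI.2.2 x a ha).2
    have h2 : a * x ∈ J := (hJ.2.2 a x hx).1
    simpa using h ⟨h1, h2⟩
  · have h1 : x * a ∈ I := (hI.2.2 x a ha).1
    have h2 : x * a ∈ J := (hJ.2.2 a x hx).2
    simpa using h ⟨h1, h2⟩

lemma star_mem_ann {X : Set A} [StarRing A] (hX : ∀ x ∈ X, star x ∈ X) {a : A}
    (ha : a ∈ ann X) : star a ∈ ann X := by
  intro x hx
  constructor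
  · have := (ha (star x) (hX x hx)).2
    calc star a * x = star (star x * a) := by simp
    _ = 0 := by rw [this, star_zero]
  · have := (ha (star x) (hX x hx)).1
    calc x * star a = star (a * star x) := by simp
    _ = 0 := by rw [this, star_zero]

lemma eq_zero_of_mem_inter_ann [StarRing A] [CStarRing A] {J : Set A}
    (hJstar : ∀ x ∈ J, star x ∈ J) {x : A} (hxJ : x ∈ J) (hxa : x ∈ ann J) : x = 0 := by
  have h : x * star x = 0 := (hxa (star x) (hJstar x hxJ)).1
  have := CStarRing.norm_self_mul_star (x := x)
  rw [h, norm_zero] at this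
  have : ‖x‖ = 0 := by nlinarith [norm_nonneg x]
  simpa using norm_eq_zero.mp this

end Alg


section Real

lemma pow_aux (m : ℕ) {s : ℝ} (h0 : 0 ≤ s) (h1 : s ≤ 1) : (1 + m * s) * (1 - s) ^ m ≤ 1 := by
  induction m with
  | zero => simp
  | succ m ih =>
      have hp : (0:ℝ) ≤ (1 - s) ^ m := pow_nonneg (by linarith) m
      have hsq : (0:ℝ) ≤ ((m:ℝ)+1) * (s * s) := by positivity
      have key : (1 + ((m:ℝ)+1) * s) * (1 - s) ^ (m+1)
          = ((1 + ((m:ℝ)+1) * s) * (1 - s)) * (1 - s) ^ m := by ring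
      have h2 : (1 + ((m:ℝ)+1) * s) * (1 - s) ≤ 1 + m * s := by nlinarith
      have h3 : ((1 + ((m:ℝ)+1) * s) * (1 - s)) * (1 - s) ^ m ≤ (1 + (m:ℝ) * s) * (1 - s) ^ m :=
        mul_le_mul_of_nonneg_right h2 hp
      push_cast
      push_cast at ih
      calc (1 + ((m:ℝ)+1) * s) * (1 - s) ^ (m+1)
          = ((1 + ((m:ℝ)+1) * s) * (1 - s)) * (1 - s) ^ m := key
        _ ≤ (1 + (m:ℝ) * s) * (1 - s) ^ m := h3
        _ ≤ 1 := ih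

lemma pow_bound (n : ℕ) (hn : 1 ≤ n) {M t : ℝ} (hM : 0 < M) (ht0 : 0 ≤ t) (htM : t ≤ M) :
    t * (1 - t / M) ^ (2 * n) ≤ M / n := by
  set s := t / M with hs
  have h0 : 0 ≤ s := div_nonneg ht0 hM.le
  have h1 : s ≤ 1 := (div_le_one hM).mpr htM
  have hp : (0:ℝ) ≤ (1 - s) ^ (2*n) := pow_nonneg (by linarith) _
  have key := pow_aux (2 * n) h0 h1
  have ht : t = M * s := by rw [hs, mul_div_assoc']; exact (mul_div_cancel_left₀ t hM.ne').symm
  have hn' : (1:ℝ) ≤ (n:ℝ) := by exact_mod_cast hn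
  rw [ht, div_eq_mul_inv]
  have hns : (n:ℝ) * (s * (1 - s) ^ (2*n)) ≤ 1 := by
    push_cast at key
    nlinarith [mul_nonneg h0 hp]
  have hnpos : (0:ℝ) < n := by linarith
  have h4 : s * (1 - s) ^ (2*n) ≤ ((n:ℝ))⁻¹ := by
    rw [← le_div_iff₀' hnpos] at hns
    simpa [one_div] using hns
  calc M * s * (1-s)^(2*n) = M * (s * (1-s)^(2*n)) := by ring
    _ ≤ M * (n:ℝ)⁻¹ := mul_le_mul_of_nonneg_left h4 hM.le

end Real

section CFC

variable {A : Type*} [NonUnitalCStarAlgebra A] [PartialOrder A] [StarOrderedRing A]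

lemma quasi_Icc {a : A} (ha : 0 ≤ a) : quasispectrum ℝ a ⊆ Set.Icc 0 ‖a‖ := by
  intro t ht
  refine ⟨quasispectrum_nonneg_of_nonneg a ha t ht, ?_⟩
  have h := norm_apply_le_norm_cfcₙ (id : ℝ → ℝ) a ht
  rw [cfcₙ_id ℝ a] at h
  calc t ≤ |t| := le_abs_self t
    _ ≤ ‖a‖ := by simpa [Real.norm_eq_abs] using h

noncomputable def au (a : A) (M : ℝ) (n : ℕ) : A :=
  cfcₙ (fun t : ℝ => 1 - (1 - t / M) ^ n) a

omit [PartialOrder A] [StarOrderedRing A] in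
lemma au_zero (a : A) (M : ℝ) : au a M 0 = 0 := by
  unfold au; simp

omit [PartialOrder A] [StarOrderedRing A] in
lemma au_isSelfAdjoint (a : A) (M : ℝ) (n : ℕ) : IsSelfAdjoint (au a M n) :=
  cfcₙ_predicate _ a

lemma au_succ {a : A} (ha : 0 ≤ a) (M : ℝ) (n : ℕ) :
    au a M (n+1) = au a M n + M⁻¹ • (a - a * au a M n) := by
  have hsa : IsSelfAdjoint a := ha.isSelfAdjoint
  have hcf : Continuous (fun t : ℝ => 1 - (1 - t / M) ^ n) := by fun_prop
  have hf0 : (fun t : ℝ => 1 - (1 - t / M) ^ n) 0 = 0 := by simp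
  have ha1 : cfcₙ (fun t : ℝ => t * (1 - (1 - t / M) ^ n)) a
      = a * au a M n := by
    have h := cfcₙ_mul (R := ℝ) (fun t : ℝ => t) (fun t : ℝ => 1 - (1 - t / M) ^ n) a
      (continuous_id.continuousOn) (by simp) hcf.continuousOn hf0
    rw [h, cfcₙ_id' ℝ a hsa]
    rfl
  have ha2 : cfcₙ (fun t : ℝ => t - t * (1 - (1 - t / M) ^ n)) a
      = a - a * au a M n := by
    have h := cfcₙ_sub (R := ℝ) (fun t : ℝ => t) (fun t : ℝ => t * (1 - (1 - t / M) ^ n)) a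
      (continuous_id.continuousOn) (by simp) (continuous_id.mul hcf).continuousOn (by simp)
    rw [h, cfcₙ_id' ℝ a, ha1]
  have ha3 : cfcₙ (fun t : ℝ => M⁻¹ * (t - t * (1 - (1 - t / M) ^ n))) a
      = M⁻¹ • (a - a * au a M n) := by
    have h := cfcₙ_const_mul (R := ℝ) M⁻¹ (fun t : ℝ => t - t * (1 - (1 - t / M) ^ n)) a
      (continuous_id.sub (continuous_id.mul hcf)).continuousOn (by simp)
    rw [h, ha2]
  have ha4 : cfcₙ (fun t : ℝ => (1 - (1 - t / M) ^ n) + M⁻¹ * (t - t * (1 - (1 - t / M) ^ n))) a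
      = au a M n + M⁻¹ • (a - a * au a M n) := by
    have h := cfcₙ_add (R := ℝ) (fun t : ℝ => 1 - (1 - t / M) ^ n)
      (fun t : ℝ => M⁻¹ * (t - t * (1 - (1 - t / M) ^ n))) a
      hcf.continuousOn hf0
      (continuous_const.mul (continuous_id.sub (continuous_id.mul hcf))).continuousOn (by simp)
    rw [h, ha3]
    rfl
  have hfun : (fun t : ℝ => 1 - (1 - t / M) ^ (n+1))
      = fun t : ℝ => (1 - (1 - t / M) ^ n) + M⁻¹ * (t - t * (1 - (1 - t / M) ^ n)) := by
    funext t
    by_cases hM : M = 0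
    · simp [hM]
    · rw [pow_succ]
      ring
  show cfcₙ (fun t : ℝ => 1 - (1 - t / M) ^ (n+1)) a = _
  rw [hfun]
  exact ha4

lemma au_norm_le_one {a : A} (ha : 0 ≤ a) {M : ℝ} (hM : 0 < M) (hMa : ‖a‖ ≤ M) (n : ℕ) :
    ‖au a M n‖ ≤ 1 := by
  refine norm_cfcₙ_le fun t ht => ?_
  obtain ⟨ht0, htM⟩ := quasi_Icc ha ht
  have h1 : 0 ≤ 1 - t / M := by
    have : t / M ≤ 1 := (div_le_one hM).mpr (le_trans htM hMa)
    linarith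
  have h2 : 1 - t / M ≤ 1 := by
    have : 0 ≤ t / M := div_nonneg ht0 hM.le
    linarith
  have h3 : (1 - t/M)^n ≤ 1 := pow_le_one₀ h1 h2
  have h4 : 0 ≤ (1 - t/M)^n := pow_nonneg h1 n
  rw [Real.norm_eq_abs, abs_le]
  constructor <;> linarith

lemma au_key {a : A} (ha : 0 ≤ a) {M : ℝ} (hM : 0 < M) (hMa : ‖a‖ ≤ M) (n : ℕ) (hn : 1 ≤ n) :
    ‖a - au a M (2*n) * a - a * au a M (2*n) + au a M (2*n) * a * au a M (2*n)‖ ≤ M / n := by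
  have hsa : IsSelfAdjoint a := ha.isSelfAdjoint
  have hcf : Continuous (fun t : ℝ => 1 - (1 - t / M) ^ (2*n)) := by fun_prop
  have hf0 : (fun t : ℝ => 1 - (1 - t / M) ^ (2*n)) 0 = 0 := by simp
  have hb1 : cfcₙ (fun t : ℝ => (1 - (1 - t / M) ^ (2*n)) * t) a = au a M (2*n) * a := by
    have h := cfcₙ_mul (R := ℝ) (fun t : ℝ => 1 - (1 - t / M) ^ (2*n)) (fun t : ℝ => t) a
      hcf.continuousOn hf0 (continuous_id.continuousOn) (by simp)
    rw [h, cfcₙ_id' ℝ a hsa]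
    rfl
  have hb2 : cfcₙ (fun t : ℝ => t * (1 - (1 - t / M) ^ (2*n))) a = a * au a M (2*n) := by
    have h := cfcₙ_mul (R := ℝ) (fun t : ℝ => t) (fun t : ℝ => 1 - (1 - t / M) ^ (2*n)) a
      (continuous_id.continuousOn) (by simp) hcf.continuousOn hf0
    rw [h, cfcₙ_id' ℝ a hsa]
    rfl
  have hb3 : cfcₙ (fun t : ℝ => (1 - (1 - t / M) ^ (2*n)) * t * (1 - (1 - t / M) ^ (2*n))) a
      = au a M (2*n) * a * au a M (2*n) := by
    have h := cfcₙ_mul (R := ℝ) (fun t : ℝ => (1 - (1 - t / M) ^ (2*n)) * t)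
      (fun t : ℝ => 1 - (1 - t / M) ^ (2*n)) a
      (hcf.mul continuous_id).continuousOn (by simp) hcf.continuousOn hf0
    rw [h, hb1]
    rfl
  have hb4 : cfcₙ (fun t : ℝ => t - (1 - (1 - t / M) ^ (2*n)) * t) a
      = a - au a M (2*n) * a := by
    have h := cfcₙ_sub (R := ℝ) (fun t : ℝ => t)
      (fun t : ℝ => (1 - (1 - t / M) ^ (2*n)) * t) a
      (continuous_id.continuousOn) (by simp) (hcf.mul continuous_id).continuousOn (by simp)
    rw [h, cfcₙ_id' ℝ a, hb1]
  have hb5 : cfcₙ (fun t : ℝ => t - (1 - (1 - t / M) ^ (2*n)) * t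
        - t * (1 - (1 - t / M) ^ (2*n))) a
      = a - au a M (2*n) * a - a * au a M (2*n) := by
    have h := cfcₙ_sub (R := ℝ) (fun t : ℝ => t - (1 - (1 - t / M) ^ (2*n)) * t)
      (fun t : ℝ => t * (1 - (1 - t / M) ^ (2*n))) a
      (continuous_id.sub (hcf.mul continuous_id)).continuousOn (by simp)
      (continuous_id.mul hcf).continuousOn (by simp)
    rw [h, hb4, hb2]
  have hb6 : cfcₙ (fun t : ℝ => t - (1 - (1 - t / M) ^ (2*n)) * t
        - t * (1 - (1 - t / M) ^ (2*n))
        + (1 - (1 - t / M) ^ (2*n)) * t * (1 - (1 - t / M) ^ (2*n))) a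
      = a - au a M (2*n) * a - a * au a M (2*n) + au a M (2*n) * a * au a M (2*n) := by
    have h := cfcₙ_add (R := ℝ)
      (fun t : ℝ => t - (1 - (1 - t / M) ^ (2*n)) * t - t * (1 - (1 - t / M) ^ (2*n)))
      (fun t : ℝ => (1 - (1 - t / M) ^ (2*n)) * t * (1 - (1 - t / M) ^ (2*n))) a
      ((continuous_id.sub (hcf.mul continuous_id)).sub (continuous_id.mul hcf)).continuousOn
      (by simp) ((hcf.mul continuous_id).mul hcf).continuousOn (by simp)
    rw [h, hb5, hb3]
  rw [← hb6]
  refine norm_cfcₙ_le fun t ht => ?_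
  obtain ⟨ht0, htM⟩ := quasi_Icc ha ht
  have htM' : t ≤ M := le_trans htM hMa
  have hval : t - (1 - (1 - t / M) ^ (2*n)) * t - t * (1 - (1 - t / M) ^ (2*n))
      + (1 - (1 - t / M) ^ (2*n)) * t * (1 - (1 - t / M) ^ (2*n))
      = t * ((1 - t/M) ^ (2*n)) ^ 2 := by ring
  rw [hval]
  have h1 : 0 ≤ 1 - t / M := by
    have : t / M ≤ 1 := (div_le_one hM).mpr htM'
    linarith
  have hnn : 0 ≤ t * ((1 - t/M) ^ (2*n)) ^ 2 :=
    mul_nonneg ht0 (pow_nonneg (pow_nonneg h1 _) _)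
  rw [Real.norm_eq_abs, abs_of_nonneg hnn]
  have hpm : ((1 - t/M) ^ (2*n)) ^ 2 = (1 - t/M) ^ (2 * (2 * n)) := (pow_mul' _ 2 (2*n)).symm
  rw [hpm]
  have hb := pow_bound (2*n) (by omega) hM ht0 htM'
  have hn0 : (0:ℝ) < (n:ℝ) := by exact_mod_cast Nat.pos_of_ne_zero (by omega)
  have hle : (n:ℝ) ≤ ((2*n : ℕ) : ℝ) := by push_cast; linarith
  calc t * (1 - t/M) ^ (2 * (2*n)) ≤ M / ((2*n : ℕ) : ℝ) := hb
    _ ≤ M / (n:ℝ) := div_le_div_of_nonneg_left hM.le hn0 hle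

end CFC


section OrderMach

variable {A : Type*} [NonUnitalCStarAlgebra A] [PartialOrder A] [StarOrderedRing A]

lemma conj_nonneg (u : A) {d : A} (hd : 0 ≤ d) :
    0 ≤ d - star u * d - d * u + star u * d * u := by
  rw [StarOrderedRing.nonneg_iff] at hd
  induction hd using AddSubmonoid.closure_induction with
  | mem x hx =>
      obtain ⟨s, rfl⟩ := hx
      have h := star_mul_self_nonneg (s - s * u)
      have e : star (s - s * u) * (s - s * u)
          = star s * s - star u * (star s * s) - (star s * s) * u
            + star u * (star s * s) * u := by
        simp only [star_sub, star_mul]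
        noncomm_ring
      rwa [e] at h
  | zero => simp
  | add x y hx hy px py =>
      have e : (x + y) - star u * (x + y) - (x + y) * u + star u * (x + y) * u
          = (x - star u * x - x * u + star u * x * u)
            + (y - star u * y - y * u + star u * y * u) := by noncomm_ring
      rw [e]
      exact add_nonneg px py

lemma sq_le_norm_smul {x : A} (hx : 0 ≤ x) : x * x ≤ ‖x‖ • x := by
  have hsa : IsSelfAdjoint x := hx.isSelfAdjoint
  have h1 : cfcₙ (fun t : ℝ => t * t) x = x * x := by
    have h := cfcₙ_mul (R := ℝ) (fun t : ℝ => t) (fun t : ℝ => t) x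
      (continuous_id.continuousOn) (by simp) (continuous_id.continuousOn) (by simp)
    rw [h, cfcₙ_id' ℝ x hsa]
  have h2 : cfcₙ (fun t : ℝ => ‖x‖ * t) x = ‖x‖ • x := by
    have h := cfcₙ_const_mul (R := ℝ) ‖x‖ (fun t : ℝ => t) x
      (continuous_id.continuousOn) (by simp)
    rw [h, cfcₙ_id' ℝ x hsa]
  rw [← h1, ← h2]
  refine cfcₙ_mono (fun t ht => ?_) ?_ ?_ ?_ ?_
  · obtain ⟨ht0, htn⟩ := quasi_Icc hx ht
    exact mul_le_mul_of_nonneg_right htn ht0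
  · exact (continuous_id.mul continuous_id).continuousOn
  · exact (continuous_const.mul continuous_id).continuousOn
  · simp
  · simp

lemma mem_closed_of_approx {K : Set A} (hcl : IsClosed K) {x : A}
    (h : ∀ ε > (0:ℝ), ∃ y ∈ K, ‖x - y‖ < ε) : x ∈ K := by
  have hx : x ∈ closure K := by
    rw [Metric.mem_closure_iff]
    intro ε hε
    obtain ⟨y, hy, hxy⟩ := h ε hε
    exact ⟨y, hy, by rwa [dist_eq_norm]⟩
  rwa [hcl.closure_eq] at hx

lemma exists_index (C δ : ℝ) (hC : 0 ≤ C) (hδ : 0 < δ) : ∃ n : ℕ, 1 ≤ n ∧ C / n < δ := by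
  obtain ⟨n, hn⟩ := exists_nat_gt (max 1 (C / δ))
  have h1 : (1:ℝ) ≤ n := le_of_lt (lt_of_le_of_lt (le_max_left _ _) hn)
  have h2 : C / δ < n := lt_of_le_of_lt (le_max_right _ _) hn
  refine ⟨n, by exact_mod_cast h1, ?_⟩
  have hn0 : (0:ℝ) < n := by linarith
  rw [div_lt_iff₀ hn0]
  rw [div_lt_iff₀ hδ] at h2
  linarith [h2]

lemma au_mem {K : Set A} (h0 : (0:A) ∈ K)
    (hadd : ∀ x ∈ K, ∀ y ∈ K, x + y ∈ K)
    (hsmul : ∀ (r : ℝ), ∀ x ∈ K, r • x ∈ K)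
    (hKK : ∀ x ∈ K, ∀ y ∈ K, x * y ∈ K)
    {a : A} (ha : 0 ≤ a) (haK : a ∈ K) (M : ℝ) : ∀ n, au a M n ∈ K := by
  intro n
  induction n with
  | zero => rw [au_zero]; exact h0
  | succ n ih =>
      rw [au_succ ha M n]
      refine hadd _ ih _ (hsmul _ _ ?_)
      have h1 : a * au a M n ∈ K := hKK a haK _ ih
      have h2 : (-1 : ℝ) • (a * au a M n) ∈ K := hsmul _ _ h1
      have h3 := hadd a haK _ h2
      simpa [sub_eq_add_neg] using h3

lemma au_approx (k : A) (n : ℕ) (hn : 1 ≤ n) :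
    ‖star k - au (star k * k) (‖star k * k‖ + 1) (2*n) * star k‖ ^ 2
      ≤ (‖star k * k‖ + 1) / n ∧
    ‖k - k * au (star k * k) (‖star k * k‖ + 1) (2*n)‖ ^ 2 ≤ (‖star k * k‖ + 1) / n := by
  set a := star k * k with hadef
  set M := ‖a‖ + 1 with hMdef
  have ha : 0 ≤ a := star_mul_self_nonneg k
  have hM : 0 < M := by positivity
  have hMa : ‖a‖ ≤ M := by simp [hMdef]
  set u := au a M (2*n) with hudef
  have hu : IsSelfAdjoint u := au_isSelfAdjoint a M (2*n)
  have hX := au_key ha hM hMa n hn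
  have e : (star k - u * star k) * (k - k * u) = a - u * a - a * u + u * a * u := by
    rw [hadef]
    noncomm_ring
  have e1 : star (star k - u * star k) = k - k * u := by
    simp [star_sub, star_mul, hu.star_eq]
  have hfst : ‖star k - u * star k‖ ^ 2 ≤ M / n := by
    have h2 : ‖star k - u * star k‖ ^ 2 = ‖(star k - u * star k) * (k - k * u)‖ := by
      rw [← e1, CStarRing.norm_self_mul_star]
      ring
    rw [h2, e]
    exact hX
  refine ⟨hfst, ?_⟩
  have e2 : star (k - k * u) = star k - u * star k := by
    simp [star_sub, star_mul, hu.star_eq]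
  have h3 : ‖k - k * u‖ = ‖star k - u * star k‖ := by
    rw [← e2, norm_star]
  rw [h3]
  exact hfst

end OrderMach

section BMach

variable {A : Type*} [NonUnitalCStarAlgebra A] [PartialOrder A] [StarOrderedRing A]

lemma star_mem_of {K : Set A} (hcl : IsClosed K) (h0 : (0:A) ∈ K)
    (hadd : ∀ x ∈ K, ∀ y ∈ K, x + y ∈ K)
    (hsmul : ∀ (r : ℝ), ∀ x ∈ K, r • x ∈ K)
    (hKK : ∀ x ∈ K, ∀ y ∈ K, x * y ∈ K) {k : A} (hk : star k * k ∈ K)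
    (hr : ∀ u ∈ K, u * star k ∈ K) : star k ∈ K := by
  refine mem_closed_of_approx hcl fun ε hε => ?_
  obtain ⟨n, hn1, hlt⟩ := exists_index (‖star k * k‖ + 1) (ε^2) (by positivity) (by positivity)
  have hmem : au (star k * k) (‖star k * k‖ + 1) (2*n) ∈ K :=
    au_mem h0 hadd hsmul hKK (star_mul_self_nonneg k) hk (‖star k * k‖ + 1) (2*n)
  refine ⟨au (star k * k) (‖star k * k‖ + 1) (2*n) * star k, hr _ hmem, ?_⟩
  have hb := (au_approx k n hn1).1
  nlinarith [norm_nonneg (star k - au (star k * k) (‖star k * k‖ + 1) (2*n) * star k)]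

lemma self_mem_of {K : Set A} (hcl : IsClosed K) (h0 : (0:A) ∈ K)
    (hadd : ∀ x ∈ K, ∀ y ∈ K, x + y ∈ K)
    (hsmul : ∀ (r : ℝ), ∀ x ∈ K, r • x ∈ K)
    (hKK : ∀ x ∈ K, ∀ y ∈ K, x * y ∈ K) {k : A} (hk : star k * k ∈ K)
    (hr : ∀ u ∈ K, k * u ∈ K) : k ∈ K := by
  refine mem_closed_of_approx hcl fun ε hε => ?_
  obtain ⟨n, hn1, hlt⟩ := exists_index (‖star k * k‖ + 1) (ε^2) (by positivity) (by positivity)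
  have hmem : au (star k * k) (‖star k * k‖ + 1) (2*n) ∈ K :=
    au_mem h0 hadd hsmul hKK (star_mul_self_nonneg k) hk (‖star k * k‖ + 1) (2*n)
  refine ⟨k * au (star k * k) (‖star k * k‖ + 1) (2*n), hr _ hmem, ?_⟩
  have hb := (au_approx k n hn1).2
  nlinarith [norm_nonneg (k - k * au (star k * k) (‖star k * k‖ + 1) (2*n))]

lemma smul_mem_of_approxUnit {B K : Set A} (happ : ContainsApproxUnit B)
    (hBsmul : ∀ (c : ℂ), ∀ b ∈ B, c • b ∈ B)
    (hBmod : ∀ b ∈ B, ∀ x ∈ K, b * x ∈ K)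
    (hcl : IsClosed K) : ∀ (c : ℂ), ∀ x ∈ K, c • x ∈ K := by
  intro c x hx
  refine mem_closed_of_approx hcl fun ε hε => ?_
  obtain ⟨b, hbB, hb1, hba, hab⟩ := happ x (ε / (‖c‖+1)) (by positivity)
  refine ⟨(c • b) * x, hBmod _ (hBsmul c b hbB) x hx, ?_⟩
  have he : c • x - (c • b) * x = c • (x - b * x) := by
    rw [smul_mul_assoc, ← smul_sub]
  rw [he, norm_smul]
  have h0 := norm_nonneg (x - b * x)
  have h1 := norm_nonneg c
  have h2 : (0:ℝ) < ‖c‖ + 1 := by positivity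
  rw [lt_div_iff₀ h2] at hba
  nlinarith

lemma smulR_of_smulC {K : Set A} (h : ∀ (c : ℂ), ∀ x ∈ K, c • x ∈ K) :
    ∀ (r : ℝ), ∀ x ∈ K, r • x ∈ K := by
  intro r x hx
  rw [← Complex.coe_smul]
  exact h _ x hx

set_option maxHeartbeats 1000000 in
/-- Hereditary property of closed ideals in `B`. -/
lemma hereditary {B K : Set A} (hK : IsIdealIn B K)
    (hsmul : ∀ (r : ℝ), ∀ x ∈ K, r • x ∈ K)
    {x y : A} (hxB : x ∈ B) (hx : 0 ≤ x) (hxy : x ≤ y) (hyK : y ∈ K) : x ∈ K := by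
  obtain ⟨hKB, h0, hadd, hmod, hcl⟩ := hK
  have hy : 0 ≤ y := hx.trans hxy
  set M := ‖y‖ + 1 with hMdef
  have hM : 0 < M := by positivity
  have hMa : ‖y‖ ≤ M := by simp [hMdef]
  have hm0 : (0:ℝ) ≤ ‖y‖ := norm_nonneg y
  have hKK : ∀ p ∈ K, ∀ q ∈ K, p * q ∈ K := fun p hp q hq => (hmod p (hKB hp) q hq).1
  have hxsa : IsSelfAdjoint x := hx.isSelfAdjoint
  have hx2 : (0:A) ≤ x * x := by simpa [hxsa.star_eq] using star_mul_self_nonneg x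
  refine mem_closed_of_approx hcl fun ε hε => ?_
  obtain ⟨n, hn1, hlt⟩ := exists_index M (ε^2 / (4 * (‖x‖+1))) hM.le (by positivity)
  set u := au y M (2*n) with hudef
  have huK : u ∈ K := au_mem h0 hadd hsmul hKK hy hyK M (2*n)
  have huB : u ∈ B := hKB huK
  have husa : IsSelfAdjoint u := au_isSelfAdjoint y M (2*n)
  have hu1 : ‖u‖ ≤ 1 := au_norm_le_one hy hM hMa (2*n)
  have hm1 : u * x ∈ K := (hmod x hxB u huK).2
  have hm2 : u * x * u ∈ K := (hmod u huB (u*x) hm1).2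
  refine ⟨u * x * u, hm2, ?_⟩
  have hC'' := au_key hy hM hMa n hn1
  rw [← hudef] at hC''
  have e1 : star (x - x * u) = x - u * x := by
    simp [star_sub, star_mul, husa.star_eq, hxsa.star_eq]
  have hxu : ‖x - x*u‖^2 ≤ ‖x‖ * (M/n) := by
    have hDexp : (x - u*x) * (x - x*u) = x*x - u*(x*x) - (x*x)*u + u*(x*x)*u := by
      noncomm_ring
    have hDpos : (0:A) ≤ x*x - u*(x*x) - (x*x)*u + u*(x*x)*u := by
      have h := conj_nonneg u hx2
      rwa [husa.star_eq] at h
    have hd : (0:A) ≤ ‖x‖ • x - x*x := sub_nonneg.mpr (sq_le_norm_smul hx)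
    have hconj := conj_nonneg u hd
    rw [husa.star_eq] at hconj
    have hsplit : (‖x‖ • x - x*x) - u * (‖x‖ • x - x*x) - (‖x‖ • x - x*x) * u
        + u * (‖x‖ • x - x*x) * u
        = ‖x‖ • (x - u*x - x*u + u*x*u) - (x*x - u*(x*x) - (x*x)*u + u*(x*x)*u) := by
      simp only [mul_sub, sub_mul, mul_smul_comm, smul_mul_assoc, smul_sub, smul_add]
      abel
    rw [hsplit] at hconj
    have hD_le : x*x - u*(x*x) - (x*x)*u + u*(x*x)*u ≤ ‖x‖ • (x - u*x - x*u + u*x*u) :=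
      sub_nonneg.mp hconj
    have hC'le : x - u*x - x*u + u*x*u ≤ y - u*y - y*u + u*y*u := by
      have hdy : (0:A) ≤ y - x := sub_nonneg.mpr hxy
      have h := conj_nonneg u hdy
      rw [husa.star_eq] at h
      have hsplit2 : (y - x) - u*(y-x) - (y-x)*u + u*(y-x)*u
          = (y - u*y - y*u + u*y*u) - (x - u*x - x*u + u*x*u) := by
        simp only [mul_sub, sub_mul]
        abel
      rw [hsplit2] at h
      exact sub_nonneg.mp h
    have hD_le2 : x*x - u*(x*x) - (x*x)*u + u*(x*x)*u
        ≤ ‖x‖ • (y - u*y - y*u + u*y*u) :=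
      le_trans hD_le (smul_le_smul_of_nonneg_left hC'le (norm_nonneg x))
    have hnorm1 : ‖x*x - u*(x*x) - (x*x)*u + u*(x*x)*u‖
        ≤ ‖x‖ * ‖y - u*y - y*u + u*y*u‖ := by
      have h := CStarAlgebra.norm_le_norm_of_nonneg_of_le hDpos hD_le2
      rwa [norm_smul, Real.norm_of_nonneg (norm_nonneg x)] at h
    have hw : ‖x - x*u‖^2 = ‖x*x - u*(x*x) - (x*x)*u + u*(x*x)*u‖ := by
      calc ‖x - x*u‖^2 = ‖star (x - x*u) * (x - x*u)‖ := by
            rw [CStarRing.norm_star_mul_self]; ring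
        _ = ‖(x - u*x) * (x - x*u)‖ := by rw [e1]
        _ = _ := by rw [hDexp]
    rw [hw]
    calc ‖x*x - u*(x*x) - (x*x)*u + u*(x*x)*u‖ ≤ ‖x‖ * ‖y - u*y - y*u + u*y*u‖ := hnorm1
      _ ≤ ‖x‖ * (M/n) := mul_le_mul_of_nonneg_left hC'' (norm_nonneg x)
  have hux : ‖x - u*x‖ = ‖x - x*u‖ := by rw [← e1, norm_star]
  have htri : ‖x - u*x*u‖ ≤ 2 * ‖x - x*u‖ := by
    have e : x - u*x*u = (x - u*x) + u * (x - x*u) := by noncomm_ring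
    calc ‖x - u*x*u‖ = ‖(x - u*x) + u*(x - x*u)‖ := by rw [e]
      _ ≤ ‖x - u*x‖ + ‖u * (x - x*u)‖ := norm_add_le _ _
      _ ≤ ‖x - u*x‖ + ‖u‖ * ‖x - x*u‖ := by
          have := norm_mul_le u (x - x*u)
          linarith
      _ ≤ ‖x - x*u‖ + 1 * ‖x - x*u‖ := by
          rw [hux]
          have h1 := norm_nonneg (x - x*u)
          nlinarith
      _ = 2 * ‖x - x*u‖ := by ring
  -- conclude
  have hQ := norm_nonneg (x - x*u)
  have hR := norm_nonneg (x - u*x*u)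
  have hc := norm_nonneg x
  have hmn : (0:ℝ) ≤ M / n := by positivity
  rw [lt_div_iff₀ (by positivity : (0:ℝ) < 4 * (‖x‖+1))] at hlt
  -- hlt : M/n * (4 * (‖x‖+1)) < ε^2
  have hR2 : ‖x - u*x*u‖^2 ≤ 4 * ‖x - x*u‖^2 := by nlinarith
  have h4 : 4 * ‖x - x*u‖^2 ≤ 4 * (‖x‖ * (M/n)) := by nlinarith
  have h5 : 4 * (‖x‖ * (M/n)) ≤ M/n * (4 * (‖x‖+1)) := by nlinarith
  have hfin : ‖x - u*x*u‖^2 < ε^2 := by linarith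
  nlinarith

end BMach

section IdealMach

variable {A : Type*} [NonUnitalCStarAlgebra A] [PartialOrder A] [StarOrderedRing A]

lemma ideal_star_mem {J : Set A} (hJ : IsIdeal J)
    (hsmul : ∀ (r : ℝ), ∀ x ∈ J, r • x ∈ J) : ∀ k ∈ J, star k ∈ J := by
  obtain ⟨⟨h0, hadd, hmul⟩, hcl⟩ := hJ
  intro k hk
  exact star_mem_of hcl h0 hadd hsmul (fun x _ y hy => (hmul x y hy).1)
    ((hmul (star k) k hk).1) (fun u hu => (hmul (star k) u hu).2)

lemma ideal_mem_of_sq {J : Set A} (hJ : IsIdeal J)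
    (hsmul : ∀ (r : ℝ), ∀ x ∈ J, r • x ∈ J) {k : A} (hk : star k * k ∈ J) : k ∈ J := by
  obtain ⟨⟨h0, hadd, hmul⟩, hcl⟩ := hJ
  exact self_mem_of hcl h0 hadd hsmul (fun x _ y hy => (hmul x y hy).1) hk
    (fun u hu => (hmul k u hu).1)

lemma idealIn_star_mem {B K : Set A} (hK : IsIdealIn B K)
    (hsmul : ∀ (r : ℝ), ∀ x ∈ K, r • x ∈ K)
    (hBstar : ∀ b ∈ B, star b ∈ B) : ∀ k ∈ K, star k ∈ K := by
  obtain ⟨hKB, h0, hadd, hmod, hcl⟩ := hK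
  intro k hk
  have hskB : star k ∈ B := hBstar k (hKB hk)
  exact star_mem_of hcl h0 hadd hsmul (fun x hx y hy => (hmod x (hKB hx) y hy).1)
    ((hmod (star k) hskB k hk).1) (fun u hu => (hmod (star k) hskB u hu).2)

lemma idealIn_mem_of_sq {B K : Set A} (hK : IsIdealIn B K)
    (hsmul : ∀ (r : ℝ), ∀ x ∈ K, r • x ∈ K) {k : A} (hkB : k ∈ B)
    (hk : star k * k ∈ K) : k ∈ K := by
  obtain ⟨hKB, h0, hadd, hmod, hcl⟩ := hK
  exact self_mem_of hcl h0 hadd hsmul (fun x hx y hy => (hmod x (hKB hx) y hy).1) hk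
    (fun u hu => (hmod k hkB u hu).1)

end IdealMach

end RIaux

set_option maxHeartbeats 2000000 in
/-- Under the regular ideal intersection property and a faithful `N`-invariant
conditional expectation, `J ↦ J ∩ B` is a Boolean algebra isomorphism from the regular
ideals of `A` onto the invariant regular ideals of `B`, with inverse
`K ↦ J_K = {a : E(a*a) ∈ K}`: it is a well-defined order-preserving bijection (in both
directions) that sends complements `J^⊥` to relative complements `K^{⊥_B}`. -/
theorem regularIdeal_boolean_iso {B N : Set A} (hB : IsRegularInclusion B)
    (hRIIP : HasRIIP B) (hN : IsNormalizerSemigroup B N) (E : A → A)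
    (hE : IsCondExp B E) (hEf : IsFaithful E) (hEinv : IsInvariantCondExp N E) :
    (∀ J : Set A, IsRegularIdeal J →
      IsRegularIdealIn B (J ∩ B) ∧ InvariantUnder {n | IsNormalizer B n} (J ∩ B)) ∧
    (∀ K : Set A, IsRegularIdealIn B K → InvariantUnder {n | IsNormalizer B n} K →
      IsRegularIdeal {a : A | E (star a * a) ∈ K} ∧
      {a : A | E (star a * a) ∈ K} ∩ B = K) ∧
    (∀ J : Set A, IsRegularIdeal J → {a : A | E (star a * a) ∈ J ∩ B} = J) ∧
    (∀ J₁ J₂ : Set A, IsRegularIdeal J₁ → IsRegularIdeal J₂ →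
      (J₁ ⊆ J₂ ↔ J₁ ∩ B ⊆ J₂ ∩ B)) ∧
    (∀ J : Set A, IsRegularIdeal J → ann J ∩ B = ann (J ∩ B) ∩ B) := by
  letI : NonUnitalCStarAlgebra A :=
    { ‹NonUnitalNormedRing A›, ‹StarRing A›, ‹CStarRing A›, ‹CompleteSpace A›,
      ‹NormedSpace ℂ A›, ‹IsScalarTower ℂ A A›, ‹SMulCommClass ℂ A A›, ‹StarModule ℂ A› with }
  open RIaux in
  obtain ⟨⟨⟨hB0, hBadd, hBmul, hBsmul, hBstar, hBcl⟩, happ⟩, hBdense⟩ := hB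
  obtain ⟨hNnorm, hNstar, hNmul, hNdense⟩ := hN
  obtain ⟨hE1, hE2, hE3, hE4, hE5, hE6, hE7⟩ := hE
  -- basic facts about E
  have hE0 : E 0 = 0 := by
    have h := hE4 0 0
    simpa using h
  have hEsub : ∀ x y, E (x - y) = E x - E y := by
    intro x y
    have h1 : E (-y) = -E y := by
      have h := hE4 (-1) y
      simpa using h
    rw [sub_eq_add_neg, hE3, h1, sub_eq_add_neg]
  have hEcont : Continuous E := by
    have hl : LipschitzWith 1 E := by
      refine LipschitzWith.of_dist_le_mul fun x y => ?_
      rw [dist_eq_norm, dist_eq_norm, ← hEsub]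
      simpa using hE6 (x - y)
    exact hl.continuous
  have hEmono : ∀ {x y : A}, x ≤ y → E x ≤ E y := by
    intro x y h
    have h2 := hE5 _ (sub_nonneg.mpr h)
    rw [hEsub] at h2
    exact sub_nonneg.mp h2
  have hEfaith' : ∀ a : A, E (a * star a) = 0 → a = 0 := by
    intro a h
    have h2 := hEf (star a)
    rw [star_star] at h2
    have h3 := h2 h
    rw [← star_star a, h3, star_zero]
  -- smul/star closure helpers
  have idealSmulR : ∀ J : Set A, IsIdeal J → ∀ (r : ℝ), ∀ x ∈ J, r • x ∈ J := by
    intro J hJ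
    exact RIaux.smulR_of_smulC (RIaux.smul_mem_of_approxUnit happ hBsmul
      (fun b _ x hx => (hJ.1.2.2 b x hx).1) hJ.2)
  have idealStar : ∀ J : Set A, IsIdeal J → ∀ k ∈ J, star k ∈ J := fun J hJ =>
    RIaux.ideal_star_mem hJ (idealSmulR J hJ)
  have idealSq : ∀ J : Set A, IsIdeal J → ∀ k : A, star k * k ∈ J → k ∈ J := fun J hJ k hk =>
    RIaux.ideal_mem_of_sq hJ (idealSmulR J hJ) hk
  have idealInSmulR : ∀ K : Set A, IsIdealIn B K → ∀ (r : ℝ), ∀ x ∈ K, r • x ∈ K := by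
    intro K hK
    exact RIaux.smulR_of_smulC (RIaux.smul_mem_of_approxUnit happ hBsmul
      (fun b hb x hx => (hK.2.2.2.1 b hb x hx).1) hK.2.2.2.2)
  have idealInStar : ∀ K : Set A, IsIdealIn B K → ∀ k ∈ K, star k ∈ K := fun K hK =>
    RIaux.idealIn_star_mem hK (idealInSmulR K hK) hBstar
  have idealInSq : ∀ K : Set A, IsIdealIn B K → ∀ k ∈ B, star k * k ∈ K → k ∈ K :=
    fun K hK k hkB hk => RIaux.idealIn_mem_of_sq hK (idealInSmulR K hK) hkB hk
  -- RIIP in convenient form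
  have RIIP' : ∀ J : Set A, IsRegularIdeal J → (∀ x ∈ J ∩ B, x = (0:A)) → J = {0} := by
    intro J hJ h
    by_contra hne
    obtain ⟨x, hx, hx0⟩ := hRIIP J hJ hne
    exact hx0 (h x hx)
  have key_ortho : ∀ J₁ J₂ : Set A, IsRegularIdeal J₁ → IsRegularIdeal J₂ →
      (∀ x, x ∈ (J₁ ∩ J₂) ∩ B → x = (0:A)) → J₁ ⊆ ann J₂ := by
    intro J₁ J₂ h1 h2 hz
    have hreg := RIaux.inter_isRegular h1 h2
    have h0 := RIIP' _ hreg hz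
    refine RIaux.subset_ann_of_inter h1.1.1 h2.1.1 ?_
    rw [h0]
  -- traces of ideals of A are ideals of B
  have traceIdealIn : ∀ J : Set A, IsIdeal J → IsIdealIn B (J ∩ B) := by
    intro J hJ
    obtain ⟨⟨hJ0, hJadd, hJmul⟩, hJcl⟩ := hJ
    refine ⟨Set.inter_subset_right, ⟨hJ0, hB0⟩, ?_, ?_, hJcl.inter hBcl⟩
    · intro x hx y hy
      exact ⟨hJadd x hx.1 y hy.1, hBadd x hx.2 y hy.2⟩
    · intro b hb x hx
      exact ⟨⟨(hJmul b x hx.1).1, hBmul b hb x hx.2⟩, ⟨(hJmul b x hx.1).2, hBmul x hx.2 b hb⟩⟩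
  have traceInv : ∀ J : Set A, IsIdeal J →
      InvariantUnder {n | IsNormalizer B n} (J ∩ B) := by
    intro J hJ n hn k hk
    refine ⟨?_, hn.1 k hk.2⟩
    have h1 : n * k ∈ J := (hJ.1.2.2 n k hk.1).1
    exact (hJ.1.2.2 (star n) (n * k) h1).2
  -- the map J_K
  have idealInSmulC : ∀ K : Set A, IsIdealIn B K → ∀ (c : ℂ), ∀ x ∈ K, c • x ∈ K := by
    intro K hK
    exact RIaux.smul_mem_of_approxUnit happ hBsmul
      (fun b hb x hx => (hK.2.2.2.1 b hb x hx).1) hK.2.2.2.2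
  have JKcl : ∀ K : Set A, IsClosed K → IsClosed {a : A | E (star a * a) ∈ K} := by
    intro K hKcl
    exact hKcl.preimage (hEcont.comp (continuous_star.mul continuous_id))
  have JK0 : ∀ K : Set A, (0:A) ∈ K → (0:A) ∈ {a : A | E (star a * a) ∈ K} := by
    intro K hK0
    show E (star (0:A) * 0) ∈ K
    rw [star_zero, mul_zero, hE0]; exact hK0
  have JKadd : ∀ K : Set A, IsIdealIn B K → ∀ x ∈ {a : A | E (star a * a) ∈ K},
      ∀ y ∈ {a : A | E (star a * a) ∈ K}, x + y ∈ {a : A | E (star a * a) ∈ K} := by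
    intro K hK x hx y hy
    show E (star (x+y) * (x+y)) ∈ K
    have hq : (0:A) ≤ star x * x + star y * y + (star x * x + star y * y)
        - star (x+y) * (x+y) := by
      have h := star_mul_self_nonneg (x - y)
      have e : star (x - y) * (x - y)
          = star x * x + star y * y + (star x * x + star y * y) - star (x+y) * (x+y) := by
        simp only [star_sub, star_add]
        noncomm_ring
      rwa [e] at h
    have hle := hEmono (sub_nonneg.mp hq)
    have hEw : E (star x * x + star y * y + (star x * x + star y * y)) ∈ K := by
      rw [hE3, hE3]
      exact hK.2.2.1 _ (hK.2.2.1 _ hx _ hy) _ (hK.2.2.1 _ hx _ hy)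
    exact RIaux.hereditary hK (idealInSmulR K hK) (hE1 _)
      (hE5 _ (star_mul_self_nonneg _)) hle hEw
  have JKsmul : ∀ K : Set A, IsIdealIn B K → ∀ (c : ℂ), ∀ x ∈ {a : A | E (star a * a) ∈ K},
      c • x ∈ {a : A | E (star a * a) ∈ K} := by
    intro K hK c x hx
    show E (star (c • x) * (c • x)) ∈ K
    have e : star (c • x) * (c • x) = (star c * c) • (star x * x) := by
      rw [star_smul, smul_mul_assoc, mul_smul_comm, smul_smul]
    rw [e, hE4]
    exact idealInSmulC K hK _ _ hx
  have JKmull : ∀ K : Set A, IsIdealIn B K → ∀ (c : A), ∀ x ∈ {a : A | E (star a * a) ∈ K},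
      c * x ∈ {a : A | E (star a * a) ∈ K} := by
    intro K hK c x hx
    show E (star (c*x) * (c*x)) ∈ K
    have hsa : IsSelfAdjoint (star c * c) := IsSelfAdjoint.star_mul_self c
    have h := CStarAlgebra.star_left_conjugate_le_norm_smul (a := x) (b := star c * c) hsa
    have e : star (c*x) * (c*x) = star x * (star c * c) * x := by
      rw [star_mul]; noncomm_ring
    have hle : star (c*x) * (c*x) ≤ ‖star c * c‖ • (star x * x) := by rw [e]; exact h
    have hEsm : E (‖star c * c‖ • (star x * x)) = ‖star c * c‖ • E (star x * x) := by
      rw [← Complex.coe_smul, hE4, Complex.coe_smul]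
    exact RIaux.hereditary hK (idealInSmulR K hK) (hE1 _)
      (hE5 _ (star_mul_self_nonneg _)) ((hEmono hle).trans_eq hEsm)
      (idealInSmulR K hK _ _ hx)
  have JKmulrN : ∀ K : Set A, IsIdealIn B K → InvariantUnder {n | IsNormalizer B n} K →
      ∀ x ∈ {a : A | E (star a * a) ∈ K}, ∀ n ∈ N,
      x * n ∈ {a : A | E (star a * a) ∈ K} := by
    intro K hK hKinv x hx n hn
    show E (star (x*n) * (x*n)) ∈ K
    have hinv := hEinv (star n) (hNstar n hn) (star x * x)
    rw [star_star] at hinv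
    have e : star (x*n) * (x*n) = star n * (star x * x) * n := by
      rw [star_mul]; noncomm_ring
    rw [e, hinv]
    have hnrm : IsNormalizer B (star n) := hNnorm _ (hNstar n hn)
    have h2 := hKinv (star n) hnrm _ hx
    simpa [star_star] using h2
  have JKmulr : ∀ K : Set A, IsIdealIn B K → InvariantUnder {n | IsNormalizer B n} K →
      ∀ x ∈ {a : A | E (star a * a) ∈ K}, ∀ (c : A),
      x * c ∈ {a : A | E (star a * a) ∈ K} := by
    intro K hK hKinv x hx c
    have hS : IsClosed {c : A | x * c ∈ {a : A | E (star a * a) ∈ K}} :=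
      (JKcl K hK.2.2.2.2).preimage (continuous_const.mul continuous_id)
    have hspan : (Submodule.span ℂ N : Set A)
        ⊆ {c : A | x * c ∈ {a : A | E (star a * a) ∈ K}} := by
      intro c' hc'
      induction hc' using Submodule.span_induction with
      | mem n hn => exact JKmulrN K hK hKinv x hx n hn
      | zero =>
          show x * 0 ∈ {a : A | E (star a * a) ∈ K}
          rw [mul_zero]
          exact JK0 K hK.2.1
      | add a b _ _ ha hb =>
          show x * (a + b) ∈ {a : A | E (star a * a) ∈ K}
          rw [mul_add]
          exact JKadd K hK _ ha _ hb
      | smul c' a _ ha =>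
          show x * (c' • a) ∈ {a : A | E (star a * a) ∈ K}
          rw [mul_smul_comm]
          exact JKsmul K hK c' _ ha
    have hcl := closure_minimal hspan hS
    rw [hNdense] at hcl
    exact hcl (Set.mem_univ c)
  have JKideal : ∀ K : Set A, IsIdealIn B K → InvariantUnder {n | IsNormalizer B n} K →
      IsIdeal {a : A | E (star a * a) ∈ K} := by
    intro K hK hKinv
    exact ⟨⟨JK0 K hK.2.1, JKadd K hK,
      fun a x hx => ⟨JKmull K hK a x hx, JKmulr K hK hKinv x hx a⟩⟩, JKcl K hK.2.2.2.2⟩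
  have JKtrace : ∀ K : Set A, IsIdealIn B K → {a : A | E (star a * a) ∈ K} ∩ B = K := by
    intro K hK
    apply Set.Subset.antisymm
    · rintro b ⟨hbJK, hbB⟩
      have hmem : star b * b ∈ B := hBmul _ (hBstar b hbB) b hbB
      have he : E (star b * b) = star b * b := hE2 _ hmem
      refine idealInSq K hK b hbB ?_
      rw [← he]
      exact hbJK
    · intro k hk
      have hkB := hK.1 hk
      refine ⟨?_, hkB⟩
      show E (star k * k) ∈ K
      have hmem : star k * k ∈ K := (hK.2.2.2.1 (star k) (hBstar k hkB) k hk).1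
      rw [hE2 _ (hK.1 hmem)]
      exact hmem
  have annK_sub : ∀ K : Set A, IsIdealIn B K → InvariantUnder {n | IsNormalizer B n} K →
      ann K ∩ B ⊆ ann {a : A | E (star a * a) ∈ K} := by
    intro K hK hKinv
    rintro x ⟨hxann, hxB⟩ y hy
    have hJKideal := JKideal K hK hKinv
    have hy2 : E (y * star y) ∈ K := by
      have h := idealStar _ hJKideal y hy
      simpa [star_star] using h
    have hy1 : E (star y * y) ∈ K := hy
    constructor
    · apply hEfaith' (x * y)
      have e : (x * y) * star (x * y) = x * ((y * star y) * star x) := by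
        rw [star_mul]; noncomm_ring
      rw [e, (hE7 x hxB _).1, (hE7 (star x) (hBstar x hxB) _).2, ← mul_assoc,
        (hxann _ hy2).1, zero_mul]
    · apply hEf (y * x)
      have hxs : star x ∈ ann K := RIaux.star_mem_ann (idealInStar K hK) hxann
      have e : star (y * x) * (y * x) = star x * ((star y * y) * x) := by
        rw [star_mul]; noncomm_ring
      rw [e, (hE7 (star x) (hBstar x hxB) _).1, (hE7 x hxB _).2, ← mul_assoc,
        (hxs _ hy1).1, zero_mul]
  -- the master computation for a regular ideal J
  have master : ∀ J : Set A, IsRegularIdeal J →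
      IsIdeal {a : A | E (star a * a) ∈ J ∩ B} ∧
      {a : A | E (star a * a) ∈ J ∩ B} ∩ B = J ∩ B ∧
      {a : A | E (star a * a) ∈ J ∩ B} ⊆ J ∧
      ann {a : A | E (star a * a) ∈ J ∩ B} = ann J ∧
      J ⊆ ann (ann {a : A | E (star a * a) ∈ J ∩ B}) := by
    intro J hJ
    have hKB' := traceIdealIn J hJ.1
    have hKinv' := traceInv J hJ.1
    have hJ'ideal := JKideal _ hKB' hKinv'
    have htrace := JKtrace _ hKB'
    have hJ'star := idealStar _ hJ'ideal
    have hsub : ann J ∩ B ⊆ ann {a : A | E (star a * a) ∈ J ∩ B} := by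
      intro x hx
      exact annK_sub _ hKB' hKinv' ⟨RIaux.ann_antitone Set.inter_subset_left hx.1, hx.2⟩
    have hsubJ : {a : A | E (star a * a) ∈ J ∩ B} ⊆ J := by
      have hz : ∀ x, x ∈ (ann (ann {a : A | E (star a * a) ∈ J ∩ B}) ∩ ann J) ∩ B
          → x = (0:A) := by
        rintro x ⟨⟨hx1, hx2⟩, hxB⟩
        have hxann : x ∈ ann {a : A | E (star a * a) ∈ J ∩ B} := hsub ⟨hx2, hxB⟩
        exact RIaux.eq_zero_of_mem_inter_ann
          (fun z hz => RIaux.star_mem_ann hJ'star hz) hxann hx1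
      have h := key_ortho _ _ (RIaux.ann_ann_isRegular hJ'ideal.1)
        (RIaux.ann_isRegular hJ.1.1) hz
      intro a ha
      have h2 := h (RIaux.subset_ann_ann _ ha)
      rwa [← hJ.2] at h2
    have hsupJ : J ⊆ ann (ann {a : A | E (star a * a) ∈ J ∩ B}) := by
      have hz : ∀ x, x ∈ (J ∩ ann {a : A | E (star a * a) ∈ J ∩ B}) ∩ B → x = (0:A) := by
        rintro x ⟨⟨hx1, hx2⟩, hxB⟩
        have hxJ' : x ∈ {a : A | E (star a * a) ∈ J ∩ B} := by
          have hmem : x ∈ {a : A | E (star a * a) ∈ J ∩ B} ∩ B := by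
            rw [htrace]
            exact ⟨hx1, hxB⟩
          exact hmem.1
        exact RIaux.eq_zero_of_mem_inter_ann hJ'star hxJ' hx2
      exact key_ortho _ _ hJ (RIaux.ann_isRegular hJ'ideal.1) hz
    have hannEq : ann {a : A | E (star a * a) ∈ J ∩ B} = ann J := by
      apply Set.Subset.antisymm
      · have h := RIaux.ann_antitone hsupJ
        rwa [RIaux.ann_ann_ann] at h
      · exact RIaux.ann_antitone hsubJ
    exact ⟨hJ'ideal, htrace, hsubJ, hannEq, hsupJ⟩
  -- Claim C
  have ClaimC : ∀ J : Set A, IsRegularIdeal J → ann (ann J ∩ B) ∩ B ⊆ J := by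
    rintro J hJ b ⟨hbann, hbB⟩
    have hD : IsRegularIdeal (ann J) := RIaux.ann_isRegular hJ.1.1
    obtain ⟨hD'ideal, hDtrace, hD'sub, hDannEq, hDsup⟩ := master (ann J) hD
    have hD'star := idealStar _ hD'ideal
    have hbann' : b ∈ ann {a : A | E (star a * a) ∈ ann J ∩ B} := by
      intro y hy
      have hy2 : E (y * star y) ∈ ann J ∩ B := by
        have h := hD'star y hy
        simpa [star_star] using h
      have hy1 : E (star y * y) ∈ ann J ∩ B := hy
      have hbstar : star b ∈ ann (ann J ∩ B) := by
        refine RIaux.star_mem_ann ?_ hbann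
        intro z hz
        exact ⟨RIaux.star_mem_ann (idealStar J hJ.1) hz.1, hBstar z hz.2⟩
      constructor
      · apply hEfaith' (b * y)
        have e : (b * y) * star (b * y) = b * ((y * star y) * star b) := by
          rw [star_mul]; noncomm_ring
        rw [e, (hE7 b hbB _).1, (hE7 (star b) (hBstar b hbB) _).2, ← mul_assoc,
          (hbann _ hy2).1, zero_mul]
      · apply hEf (y * b)
        have e : star (y * b) * (y * b) = star b * ((star y * y) * b) := by
          rw [star_mul]; noncomm_ring
        rw [e, (hE7 (star b) (hBstar b hbB) _).1, (hE7 b hbB _).2, ← mul_assoc,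
          (hbstar _ hy1).1, zero_mul]
    rw [hDannEq] at hbann'
    rwa [← hJ.2] at hbann'
  -- Part 5
  have part5 : ∀ J : Set A, IsRegularIdeal J → ann J ∩ B = ann (J ∩ B) ∩ B := by
    intro J hJ
    apply Set.Subset.antisymm
    · intro x hx
      exact ⟨RIaux.ann_antitone Set.inter_subset_left hx.1, hx.2⟩
    · intro x hx
      refine ⟨?_, hx.2⟩
      have h := ClaimC (ann J) (RIaux.ann_isRegular hJ.1.1)
      have hx' : x ∈ ann (ann (ann J) ∩ B) ∩ B := by
        refine ⟨?_, hx.2⟩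
        rw [← hJ.2]
        exact hx.1
      exact h hx'
  -- Part 1
  have part1 : ∀ J : Set A, IsRegularIdeal J →
      IsRegularIdealIn B (J ∩ B) ∧ InvariantUnder {n | IsNormalizer B n} (J ∩ B) := by
    intro J hJ
    refine ⟨⟨traceIdealIn J hJ.1, ?_⟩, traceInv J hJ.1⟩
    apply Set.Subset.antisymm
    · intro x hx
      exact ⟨RIaux.ann_antitone Set.inter_subset_left (RIaux.subset_ann_ann _ hx), hx.2⟩
    · intro b hb
      have hsub : ann J ∩ B ⊆ ann (J ∩ B) ∩ B := fun z hz =>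
        ⟨RIaux.ann_antitone Set.inter_subset_left hz.1, hz.2⟩
      have hb' : b ∈ ann (ann J ∩ B) ∩ B := ⟨RIaux.ann_antitone hsub hb.1, hb.2⟩
      exact ⟨ClaimC J hJ hb', hb.2⟩
  -- Part 2
  have part2 : ∀ K : Set A, IsRegularIdealIn B K → InvariantUnder {n | IsNormalizer B n} K →
      IsRegularIdeal {a : A | E (star a * a) ∈ K} ∧
      {a : A | E (star a * a) ∈ K} ∩ B = K := by
    intro K hK hKinv
    obtain ⟨hKid, hKreg⟩ := hK
    have hJKid := JKideal K hKid hKinv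
    refine ⟨⟨hJKid, ?_⟩, JKtrace K hKid⟩
    apply Set.Subset.antisymm (RIaux.subset_ann_ann _)
    intro a ha
    show E (star a * a) ∈ K
    have hsub2 : ann K ∩ B ⊆ ann {a : A | E (star a * a) ∈ K} := annK_sub K hKid hKinv
    have hKstar := idealInStar K hKid
    have hmem : E (star a * a) ∈ ann (ann K ∩ B) ∩ B := by
      refine ⟨?_, hE1 _⟩
      intro b hb
      have hbJK : b ∈ ann {a : A | E (star a * a) ∈ K} := hsub2 hb
      have hbstar : star b ∈ ann K ∩ B := ⟨RIaux.star_mem_ann hKstar hb.1, hBstar b hb.2⟩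
      have hbstarJK : star b ∈ ann {a : A | E (star a * a) ∈ K} := hsub2 hbstar
      constructor
      · have hab : a * b = 0 := (ha b hbJK).1
        have h := (hE7 b hb.2 (star a * a)).2
        rw [← h, mul_assoc, hab, mul_zero, hE0]
      · have hba : b * star a = 0 := by
          have h2 : a * star b = 0 := (ha (star b) hbstarJK).1
          calc b * star a = star (a * star b) := by simp
            _ = 0 := by rw [h2, star_zero]
        have h := (hE7 b hb.2 (star a * a)).1
        rw [← h, ← mul_assoc, hba, zero_mul, hE0]
    rw [hKreg]
    exact hmem
  -- Part 3
  have part3 : ∀ J : Set A, IsRegularIdeal J → {a : A | E (star a * a) ∈ J ∩ B} = J := by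
    intro J hJ
    obtain ⟨hJ'id, htrace, hsubJ, hannEq, hsupJ⟩ := master J hJ
    obtain ⟨hp1, hp1inv⟩ := part1 J hJ
    have hreg := (part2 (J ∩ B) hp1 hp1inv).1
    apply Set.Subset.antisymm hsubJ
    intro a haJ
    rw [hreg.2]
    exact hsupJ haJ
  -- Part 4
  have part4 : ∀ J₁ J₂ : Set A, IsRegularIdeal J₁ → IsRegularIdeal J₂ →
      (J₁ ⊆ J₂ ↔ J₁ ∩ B ⊆ J₂ ∩ B) := by
    intro J₁ J₂ h1 h2
    constructor
    · intro h x hx; exact ⟨h hx.1, hx.2⟩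
    · intro h
      have hz : ∀ x, x ∈ (J₁ ∩ ann J₂) ∩ B → x = (0:A) := by
        rintro x ⟨⟨hx1, hx2⟩, hxB⟩
        have hxJ2 : x ∈ J₂ := (h ⟨hx1, hxB⟩).1
        exact RIaux.eq_zero_of_mem_inter_ann (idealStar J₂ h2.1) hxJ2 hx2
      have hsub := key_ortho J₁ (ann J₂) h1 (RIaux.ann_isRegular h2.1.1) hz
      intro a ha
      have h2' := hsub ha
      rwa [← h2.2] at h2'
  exact ⟨part1, part2, part3, part4, part5⟩
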